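/- Let H be a real Hilbert space, F : H → ℝ differentiable with gradient ∇F that is β-Lipschitz for some β > 0, K ⊆ H a nonempty closed convex set, x ∈ K, and g ∈ H an (inexact) gradient estimate. Let x⁺ = proj_K(x − (1/β) g) be the metric projection of x − (1/β) g onto K. Then F(x⁺) ≤ F(x) + ‖∇F(x) − g‖ · ‖x − x⁺‖ − (β/2) ‖x⁺ − x‖². -/

import Mathlib

/-- `q` is the metric projection of `p` onto the set `K`: `q ∈ K` and `q` is a closest
point of `K` to `p`. -/
def IsProjOn {H : Type*} [NormedAddCommGroup H] (K : Set H) (p q : H) : Prop :=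
  q ∈ K ∧ ∀ y ∈ K, ‖p - q‖ ≤ ‖p - y‖

open scoped RealInnerProductSpace in
/-- Descent inequality for one inexact projected gradient step: if `∇F` is `β`-Lipschitz,
`x ∈ K`, and `x⁺ = proj_K(x - (1/β) g)`, then
`F(x⁺) ≤ F(x) + ‖∇F(x) - g‖·‖x - x⁺‖ - (β/2)‖x⁺ - x‖²`. -/
theorem inexact_projected_gradient_descent_inequality
    {H : Type*} [NormedAddCommGroup H] [InnerProductSpace ℝ H] [CompleteSpace H]
    (F : H → ℝ) (F' : H → H) (hF : ∀ x, HasGradientAt F (F' x) x)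
    (β : ℝ) (hβ : 0 < β) (hlip : LipschitzWith β.toNNReal F')
    (K : Set H) (hKne : K.Nonempty) (hKc : IsClosed K) (hKconv : Convex ℝ K)
    (x : H) (hx : x ∈ K) (g : H) (xp : H)
    (hproj : IsProjOn K (x - (1 / β) • g) xp) :
    F xp ≤ F x + ‖F' x - g‖ * ‖x - xp‖ - (β / 2) * ‖xp - x‖ ^ 2 := by
  set d := xp - x with hd
  have hnd : ‖x - xp‖ = ‖d‖ := by rw [hd, norm_sub_rev]
  have hcontF' : Continuous F' := hlip.continuous
  have hline : ∀ t : ℝ, HasDerivAt (fun t : ℝ => F (x + t • d))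
      (⟪F' (x + t • d), d⟫) t := by
    intro t
    have h1 : HasDerivAt (fun t : ℝ => x + t • d) d t := by
      simpa using ((hasDerivAt_id t).smul_const d).const_add x
    have h2 := ((hF (x + t • d)).hasFDerivAt.comp_hasDerivAt t h1)
    simp at h2; exact h2
  have hcont : Continuous fun t : ℝ => ⟪F' (x + t • d), d⟫ := by
    exact (hcontF'.comp (by continuity)).inner continuous_const
  have hftc : (∫ t in (0:ℝ)..1, ⟪F' (x + t • d), d⟫) = F xp - F x := by
    have := intervalIntegral.integral_eq_sub_of_hasDerivAt
      (f := fun t : ℝ => F (x + t • d)) (f' := fun t => ⟪F' (x + t • d), d⟫)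
      (a := 0) (b := 1) (fun t _ => hline t)
      (hcont.intervalIntegrable 0 1)
    simpa [hd] using this
  -- descent lemma
  have hdesc : F xp ≤ F x + ⟪F' x, d⟫ + (β / 2) * ‖d‖ ^ 2 := by
    have hmono : (∫ t in (0:ℝ)..1, ⟪F' (x + t • d), d⟫)
        ≤ ∫ t in (0:ℝ)..1, (⟪F' x, d⟫ + β * ‖d‖ ^ 2 * t) := by
      apply intervalIntegral.integral_mono_on zero_le_one
        (hcont.intervalIntegrable 0 1)
        (by apply Continuous.intervalIntegrable; continuity)
      intro t ht
      have h1 : ⟪F' (x + t • d) - F' x, d⟫ ≤ β * ‖d‖ ^ 2 * t := by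
        calc ⟪F' (x + t • d) - F' x, d⟫ ≤ ‖F' (x + t • d) - F' x‖ * ‖d‖ :=
              real_inner_le_norm _ _
          _ ≤ (β * (t * ‖d‖)) * ‖d‖ := by
              apply mul_le_mul_of_nonneg_right _ (norm_nonneg _)
              have := hlip.dist_le_mul (x + t • d) x
              rw [Real.coe_toNNReal _ hβ.le] at this
              simpa [dist_eq_norm, norm_smul, abs_of_nonneg ht.1] using this
          _ = β * ‖d‖ ^ 2 * t := by ring
      calc ⟪F' (x + t • d), d⟫
          = ⟪F' x, d⟫ + ⟪F' (x + t • d) - F' x, d⟫ := by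
            rw [← inner_add_left, add_sub_cancel]
        _ ≤ ⟪F' x, d⟫ + β * ‖d‖ ^ 2 * t := by linarith
    have hval : (∫ t in (0:ℝ)..1, (⟪F' x, d⟫ + β * ‖d‖ ^ 2 * t))
        = ⟪F' x, d⟫ + (β / 2) * ‖d‖ ^ 2 := by
      rw [intervalIntegral.integral_add
        (by apply Continuous.intervalIntegrable; continuity)
        (by apply Continuous.intervalIntegrable; continuity),
        intervalIntegral.integral_const_mul, integral_id]
      simp
      ring
    rw [hftc, hval] at hmono
    linarith
  -- projection inequality
  obtain ⟨hxpK, hmin⟩ := hproj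
  haveI : Nonempty K := ⟨⟨xp, hxpK⟩⟩
  have hinner : ∀ w ∈ K, ⟪(x - (1 / β) • g) - xp, w - xp⟫ ≤ 0 := by
    rw [← norm_eq_iInf_iff_real_inner_le_zero hKconv hxpK]
    apply le_antisymm
    · exact le_ciInf fun w => hmin w.1 w.2
    · have hbb : BddBelow (Set.range fun w : K => ‖x - (1 / β) • g - (w : H)‖) :=
        ⟨0, by rintro a ⟨w, rfl⟩; exact norm_nonneg _⟩
      exact ciInf_le hbb ⟨xp, hxpK⟩
  have hkey := hinner x hx
  have hβne : β ≠ 0 := hβ.ne'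
  have hgd : ⟪g, d⟫ ≤ -(β * ‖d‖ ^ 2) := by
    have hexp : ⟪(x - (1 / β) • g) - xp, x - xp⟫
        = ‖d‖ ^ 2 - (1 / β) * ⟪g, x - xp⟫ := by
      rw [sub_right_comm, inner_sub_left, real_inner_smul_left,
        real_inner_self_eq_norm_sq, hnd]
    rw [hexp] at hkey
    have h2 : ⟪g, x - xp⟫ = -⟪g, d⟫ := by
      rw [hd, ← inner_neg_right]; congr 1; abel
    rw [h2] at hkey
    have h4 : ‖d‖ ^ 2 + (1 / β) * ⟪g, d⟫ ≤ 0 := by linarith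
    have h5 := mul_le_mul_of_nonneg_left h4 hβ.le
    rw [mul_zero, mul_add, ← mul_assoc, mul_one_div_cancel hβne, one_mul] at h5
    linarith
  have hFd : ⟪F' x, d⟫ ≤ ‖F' x - g‖ * ‖x - xp‖ - β * ‖d‖ ^ 2 := by
    have h1 : ⟪F' x - g, d⟫ ≤ ‖F' x - g‖ * ‖d‖ := real_inner_le_norm _ _
    have h3 : ⟪F' x, d⟫ = ⟪F' x - g, d⟫ + ⟪g, d⟫ := by
      rw [inner_sub_left]; ring
    rw [hnd]
    linarith

  linarith
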